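/- The six vector fields X₁ = ∂_f, X₂ = ∂_g, X₃ = x∂ₓ + f∂_f + g∂_g, X₄ = g∂_f - f∂_g, X₅ = 2xf∂ₓ + (f² - g²)∂_f + 2fg∂_g, X₆ = 2xg∂ₓ + 2fg∂_f - (f² - g²)∂_g on ℝ³ satisfy [X₁,X₂] = [X₃,X₄] = [X₅,X₆] = 0, [X₁,X₃] = X₁, [X₁,X₄] = -X₂, [X₁,X₅] = 2X₃, [X₁,X₆] = 2X₄, [X₂,X₃] = X₂, [X₂,X₄] = X₁, [X₂,X₅] = -2X₄, [X₂,X₆] = 2X₃, [X₃,X₅] = X₅, [X₃,X₆] = X₆, [X₄,X₅] = X₆, [X₄,X₆] = -X₅; hence they span a 6-dimensional Lie algebra. -/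

import Mathlib

set_option linter.unreachableTactic false
set_option linter.unusedTactic false
set_option linter.unnecessarySeqFocus false

lemma fd_proj (i : Fin 3) (v w : Fin 3 → ℝ) :
    fderiv ℝ (fun v : Fin 3 → ℝ => v i) v w = w i := by
  rw [show (fun v : Fin 3 → ℝ => v i) = ⇑(ContinuousLinearMap.proj (R := ℝ) (φ := fun _ : Fin 3 => ℝ) i) from rfl,
    ContinuousLinearMap.fderiv]
  rfl

lemma fd3 (a b c : (Fin 3 → ℝ) → ℝ) (v w : Fin 3 → ℝ)
    (ha : DifferentiableAt ℝ a v) (hb : DifferentiableAt ℝ b v) (hc : DifferentiableAt ℝ c v) :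
    fderiv ℝ (fun v => ![a v, b v, c v]) v w
      = ![fderiv ℝ a v w, fderiv ℝ b v w, fderiv ℝ c v w] := by
  have h : (fun v => ![a v, b v, c v]) = fun v (i : Fin 3) => ![a, b, c] i v := by
    funext v i; fin_cases i <;> rfl
  rw [h, fderiv_pi]
  · funext i; fin_cases i <;> rfl
  · intro i; fin_cases i <;> simpa

lemma fdC3 (k v : Fin 3 → ℝ) :
    fderiv ℝ (fun _ : Fin 3 → ℝ => k) v = 0 := fderiv_const_apply k

lemma fdX3 (v w : Fin 3 → ℝ) :
    fderiv ℝ (fun v : Fin 3 → ℝ => ![v 0, v 1, v 2]) v w = ![w 0, w 1, w 2] := by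
  rw [fd3 _ _ _ _ _ (by fun_prop) (by fun_prop) (by fun_prop)]
  simp only [fd_proj]

lemma fdX4 (v w : Fin 3 → ℝ) :
    fderiv ℝ (fun v : Fin 3 → ℝ => ![0, v 2, -(v 1)]) v w = ![0, w 2, -(w 1)] := by
  rw [fd3 _ _ _ _ _ (by fun_prop) (by fun_prop) (by fun_prop)]
  funext i
  fin_cases i <;> (simp only [pow_two]; simp (disch := fun_prop) [fderiv_sub, fderiv_mul, fderiv_neg, fd_proj]; try ring)

lemma fdX5 (v w : Fin 3 → ℝ) :
    fderiv ℝ (fun v : Fin 3 → ℝ => ![2 * v 0 * v 1, v 1 ^ 2 - v 2 ^ 2, 2 * v 1 * v 2]) v w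
      = ![2 * w 0 * v 1 + 2 * v 0 * w 1, 2 * v 1 * w 1 - 2 * v 2 * w 2,
          2 * w 1 * v 2 + 2 * v 1 * w 2] := by
  rw [fd3 _ _ _ _ _ (by fun_prop) (by fun_prop) (by fun_prop)]
  funext i
  fin_cases i <;> (simp only [pow_two]; simp (disch := fun_prop) [fderiv_fun_sub, fderiv_fun_mul, fderiv_fun_neg, fd_proj]; try ring)

lemma fdX6 (v w : Fin 3 → ℝ) :
    fderiv ℝ (fun v : Fin 3 → ℝ => ![2 * v 0 * v 2, 2 * v 1 * v 2, -(v 1 ^ 2 - v 2 ^ 2)]) v w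
      = ![2 * w 0 * v 2 + 2 * v 0 * w 2, 2 * w 1 * v 2 + 2 * v 1 * w 2,
          -(2 * v 1 * w 1 - 2 * v 2 * w 2)] := by
  rw [fd3 _ _ _ _ _ (by fun_prop) (by fun_prop) (by fun_prop)]
  funext i
  fin_cases i <;> (simp only [pow_two]; simp (disch := fun_prop) [fderiv_fun_sub, fderiv_fun_mul, fderiv_fun_neg, fd_proj]; try ring)

/-- Lie bracket of vector fields on `ℝ³`, viewed as maps `ℝ³ → ℝ³`:
`[X,Y](v) = DY(v)·X(v) - DX(v)·Y(v)`. -/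
noncomputable def lieBracketVF (X Y : (Fin 3 → ℝ) → (Fin 3 → ℝ)) :
    (Fin 3 → ℝ) → (Fin 3 → ℝ) :=
  fun v => fderiv ℝ Y v (X v) - fderiv ℝ X v (Y v)

section Brackets

local notation "V1" => (fun _ : Fin 3 → ℝ => ![(0:ℝ), 1, 0])
local notation "V2" => (fun _ : Fin 3 → ℝ => ![(0:ℝ), 0, 1])
local notation "V3" => (fun v : Fin 3 → ℝ => ![v 0, v 1, v 2])
local notation "V4" => (fun v : Fin 3 → ℝ => ![(0:ℝ), v 2, -(v 1)])
local notation "V5" => (fun v : Fin 3 → ℝ => ![2 * v 0 * v 1, v 1 ^ 2 - v 2 ^ 2, 2 * v 1 * v 2])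
local notation "V6" => (fun v : Fin 3 → ℝ => ![2 * v 0 * v 2, 2 * v 1 * v 2, -(v 1 ^ 2 - v 2 ^ 2)])

lemma br12 : lieBracketVF V1 V2 = 0 := by
  funext v; simp only [lieBracketVF, fdC3]; simp

lemma br34 : lieBracketVF V3 V4 = 0 := by
  funext v; simp only [lieBracketVF, fdX3, fdX4]
  funext i; fin_cases i <;> simp <;> ring

lemma br56 : lieBracketVF V5 V6 = 0 := by
  funext v; simp only [lieBracketVF, fdX5, fdX6]
  funext i; fin_cases i <;> simp <;> ring

lemma br13 : lieBracketVF V1 V3 = V1 := by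
  funext v; simp only [lieBracketVF, fdC3, fdX3]
  funext i; fin_cases i <;> simp <;> ring

lemma br14 : lieBracketVF V1 V4 = -V2 := by
  funext v; simp only [lieBracketVF, fdC3, fdX4]
  funext i; fin_cases i <;> simp <;> ring

lemma br15 : lieBracketVF V1 V5 = 2 • V3 := by
  funext v; simp only [lieBracketVF, fdC3, fdX5]
  funext i; fin_cases i <;> simp <;> ring

lemma br16 : lieBracketVF V1 V6 = 2 • V4 := by
  funext v; simp only [lieBracketVF, fdC3, fdX6]
  funext i; fin_cases i <;> simp <;> ring

lemma br23 : lieBracketVF V2 V3 = V2 := by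
  funext v; simp only [lieBracketVF, fdC3, fdX3]
  funext i; fin_cases i <;> simp <;> ring

lemma br24 : lieBracketVF V2 V4 = V1 := by
  funext v; simp only [lieBracketVF, fdC3, fdX4]
  funext i; fin_cases i <;> simp <;> ring

lemma br25 : lieBracketVF V2 V5 = -(2 • V4) := by
  funext v; simp only [lieBracketVF, fdC3, fdX5]
  funext i; fin_cases i <;> simp <;> ring

lemma br26 : lieBracketVF V2 V6 = 2 • V3 := by
  funext v; simp only [lieBracketVF, fdC3, fdX6]
  funext i; fin_cases i <;> simp <;> ring

lemma br35 : lieBracketVF V3 V5 = V5 := by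
  funext v; simp only [lieBracketVF, fdX3, fdX5]
  funext i; fin_cases i <;> simp <;> ring

lemma br36 : lieBracketVF V3 V6 = V6 := by
  funext v; simp only [lieBracketVF, fdX3, fdX6]
  funext i; fin_cases i <;> simp <;> ring

lemma br45 : lieBracketVF V4 V5 = V6 := by
  funext v; simp only [lieBracketVF, fdX4, fdX5]
  funext i; fin_cases i <;> simp <;> ring

lemma br46 : lieBracketVF V4 V6 = -V5 := by
  funext v; simp only [lieBracketVF, fdX4, fdX6]
  funext i; fin_cases i <;> simp <;> ring

lemma linIndep6 : LinearIndependent ℝ ![V1, V2, V3, V4, V5, V6] := by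
  rw [Fintype.linearIndependent_iff]
  intro g hg
  have e1 := congrFun (congrFun hg ![1, 0, 0]) 0
  have e2 := congrFun (congrFun hg ![1, 0, 0]) 1
  have e3 := congrFun (congrFun hg ![1, 0, 0]) 2
  have e4 := congrFun (congrFun hg ![0, 1, 0]) 1
  have e5 := congrFun (congrFun hg ![0, 1, 0]) 2
  have e6 := congrFun (congrFun hg ![1, 0, 1]) 0
  rw [Fin.sum_univ_six] at e1 e2 e3 e4 e5 e6
  simp only [Pi.add_apply, Pi.smul_apply, Pi.zero_apply, smul_eq_mul] at e1 e2 e3 e4 e5 e6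
  have h1 : g 0 * 0 + g 1 * 0 + g 2 * 1 + g 3 * 0 + g 4 * (2 * 1 * 0) + g 5 * (2 * 1 * 0) = 0 := e1
  have h2 : g 0 * 1 + g 1 * 0 + g 2 * 0 + g 3 * 0 + g 4 * ((0:ℝ) ^ 2 - 0 ^ 2) + g 5 * (2 * 0 * 0) = 0 := e2
  have h3 : g 0 * 0 + g 1 * 1 + g 2 * 0 + g 3 * (-(0:ℝ)) + g 4 * (2 * 0 * 0) + g 5 * (-((0:ℝ) ^ 2 - 0 ^ 2)) = 0 := e3
  have h4 : g 0 * 1 + g 1 * 0 + g 2 * 1 + g 3 * 0 + g 4 * ((1:ℝ) ^ 2 - 0 ^ 2) + g 5 * (2 * 1 * 0) = 0 := e4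
  have h5 : g 0 * 0 + g 1 * 1 + g 2 * 0 + g 3 * (-(1:ℝ)) + g 4 * (2 * 1 * 0) + g 5 * (-((1:ℝ) ^ 2 - 0 ^ 2)) = 0 := e5
  have h6 : g 0 * 0 + g 1 * 0 + g 2 * 1 + g 3 * 0 + g 4 * (2 * 1 * 0) + g 5 * (2 * 1 * 1) = 0 := e6
  norm_num at h1 h2 h3 h4 h5 h6
  intro i
  fin_cases i
  · show g 0 = 0; linarith
  · show g 1 = 0; linarith
  · show g 2 = 0; linarith
  · show g 3 = 0; linarith
  · show g 4 = 0; linarith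
  · show g 5 = 0; linarith

end Brackets

/-- Commutation relations of the six vector fields `X₁ = ∂_f`, `X₂ = ∂_g`,
`X₃ = x∂ₓ + f∂_f + g∂_g`, `X₄ = g∂_f - f∂_g`, `X₅ = 2xf∂ₓ + (f²-g²)∂_f + 2fg∂_g`,
`X₆ = 2xg∂ₓ + 2fg∂_f - (f²-g²)∂_g` (coordinates `(x,f,g) = (v 0, v 1, v 2)`);
they span a 6-dimensional Lie algebra. -/
theorem commutators_case_N361 :
    let X1 : (Fin 3 → ℝ) → (Fin 3 → ℝ) := fun _ => ![0, 1, 0]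
    let X2 : (Fin 3 → ℝ) → (Fin 3 → ℝ) := fun _ => ![0, 0, 1]
    let X3 : (Fin 3 → ℝ) → (Fin 3 → ℝ) := fun v => ![v 0, v 1, v 2]
    let X4 : (Fin 3 → ℝ) → (Fin 3 → ℝ) := fun v => ![0, v 2, -(v 1)]
    let X5 : (Fin 3 → ℝ) → (Fin 3 → ℝ) :=
      fun v => ![2 * v 0 * v 1, v 1 ^ 2 - v 2 ^ 2, 2 * v 1 * v 2]
    let X6 : (Fin 3 → ℝ) → (Fin 3 → ℝ) :=
      fun v => ![2 * v 0 * v 2, 2 * v 1 * v 2, -(v 1 ^ 2 - v 2 ^ 2)]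
    lieBracketVF X1 X2 = 0 ∧ lieBracketVF X3 X4 = 0 ∧ lieBracketVF X5 X6 = 0 ∧
    lieBracketVF X1 X3 = X1 ∧ lieBracketVF X1 X4 = -X2 ∧
    lieBracketVF X1 X5 = 2 • X3 ∧ lieBracketVF X1 X6 = 2 • X4 ∧
    lieBracketVF X2 X3 = X2 ∧ lieBracketVF X2 X4 = X1 ∧
    lieBracketVF X2 X5 = -(2 • X4) ∧ lieBracketVF X2 X6 = 2 • X3 ∧
    lieBracketVF X3 X5 = X5 ∧ lieBracketVF X3 X6 = X6 ∧
    lieBracketVF X4 X5 = X6 ∧ lieBracketVF X4 X6 = -X5 ∧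
    LinearIndependent ℝ ![X1, X2, X3, X4, X5, X6] := by
  intro X1 X2 X3 X4 X5 X6
  exact ⟨br12, br34, br56, br13, br14, br15, br16, br23, br24, br25, br26,
    br35, br36, br45, br46, linIndep6⟩
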